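/- Let X = {x_1,...,x_N} be a finite set, let F be a family of non-negative real-valued functions on X, and for f ∈ F let L(f) = Σ_{x∈X} f(x); assume L(f) > 0 for each f ∈ F. Let s: X → (0,∞) satisfy s(x) ≥ sup_{f∈F} f(x)/L(f) for all x ∈ X (an upper bound on the sensitivity), let S = Σ_{x∈X} s(x), and let q(x) = s(x)/S. Let X_1,...,X_m be i.i.d. samples from the distribution q on X and define L_S(f) = (1/m) Σ_{i=1}^m f(X_i)/q(X_i). Then for every ε > 0 and every f ∈ F, P( |L_S(f)/L(f) − 1| > ε ) ≤ 2 exp( −2 m ε² / S² ). -/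

import Mathlib

open scoped Classical
open Real

lemma hoeffding_analytic (p h : ℝ) (hp0 : 0 ≤ p) (hp1 : p ≤ 1) :
    (1 - p) * Real.exp (-p * h) + p * Real.exp ((1 - p) * h) ≤ Real.exp (h ^ 2 / 8) := by
  rcases eq_or_lt_of_le hp0 with h0 | h0
  · have : (1 - p) * Real.exp (-p * h) + p * Real.exp ((1 - p) * h) = 1 := by
      simp [← h0]
    rw [this, show (1:ℝ) = Real.exp 0 by simp]
    exact Real.exp_le_exp.2 (by positivity)
  rcases eq_or_lt_of_le hp1 with h1 | h1
  · have : (1 - p) * Real.exp (-p * h) + p * Real.exp ((1 - p) * h) = 1 := by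
      simp [h1]
    rw [this, show (1:ℝ) = Real.exp 0 by simp]
    exact Real.exp_le_exp.2 (by positivity)
  -- 0 < p < 1
  set D : ℝ → ℝ := fun x => 1 - p + p * Real.exp x with hD
  have hDpos : ∀ x, 0 < D x := fun x => by
    have := Real.exp_pos x
    simp only [hD]; nlinarith
  set g1 : ℝ → ℝ := fun x => x / 4 + p - p * Real.exp x / D x with hg1
  set g : ℝ → ℝ := fun x => x ^ 2 / 8 + p * x - Real.log (D x) with hg
  have hDd : ∀ x, HasDerivAt D (p * Real.exp x) x := fun x => by
    exact ((Real.hasDerivAt_exp x).const_mul p).const_add (1 - p)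
  have hgd : ∀ x, HasDerivAt g (g1 x) x := by
    intro x
    have h1' : HasDerivAt (fun x : ℝ => x ^ 2 / 8) (x / 4) x := by
      have := (hasDerivAt_pow 2 x).div_const 8
      simpa using this.congr_deriv (by push_cast; ring)
    have h2' : HasDerivAt (fun x : ℝ => p * x) p x := by
      simpa using (hasDerivAt_id x).const_mul p
    have h3' : HasDerivAt (fun x => Real.log (D x)) (p * Real.exp x / D x) x :=
      (hDd x).log (ne_of_gt (hDpos x))
    exact (h1'.add h2').sub h3'
  have hg1d : ∀ x, HasDerivAt g1 (1 / 4 - p * (1 - p) * Real.exp x / (D x) ^ 2) x := by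
    intro x
    have h1' : HasDerivAt (fun x : ℝ => x / 4 + p) (1 / 4) x := by
      simpa using ((hasDerivAt_id x).div_const 4).add_const p
    have h2' : HasDerivAt (fun x => p * Real.exp x / D x)
        ((p * Real.exp x * D x - p * Real.exp x * (p * Real.exp x)) / (D x) ^ 2) x :=
      ((Real.hasDerivAt_exp x).const_mul p).div (hDd x) (ne_of_gt (hDpos x))
    have heq : (p * Real.exp x * D x - p * Real.exp x * (p * Real.exp x)) / (D x) ^ 2
        = p * (1 - p) * Real.exp x / (D x) ^ 2 := by
      rw [hD]; ring_nf
    rw [heq] at h2'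
    exact h1'.sub h2'
  have hg1nonneg : ∀ x, 0 ≤ 1 / 4 - p * (1 - p) * Real.exp x / (D x) ^ 2 := by
    intro x
    have hDx : (0:ℝ) < 1 - p + p * Real.exp x := by
      have := hDpos x; simpa [hD] using this
    have hsq : 4 * (p * (1 - p) * Real.exp x) ≤ (1 - p + p * Real.exp x) ^ 2 := by
      nlinarith [sq_nonneg ((1 - p) - p * Real.exp x)]
    have hDeq : D x = 1 - p + p * Real.exp x := by simp [hD]
    rw [hDeq, sub_nonneg, div_le_iff₀ (by positivity)]
    linarith
  have hg1mono : Monotone g1 := by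
    apply monotone_of_deriv_nonneg
    · exact fun x => (hg1d x).differentiableAt
    · intro x; rw [(hg1d x).deriv]; exact hg1nonneg x
  have hg10 : g1 0 = 0 := by
    simp only [hg1, hD]
    field_simp
    rw [Real.exp_zero]; ring
  have hgnonneg : ∀ x, 0 ≤ g x := by
    have hg0 : g 0 = 0 := by simp [hg, hD]
    intro x
    rcases le_or_gt 0 x with hx | hx
    · have : MonotoneOn g (Set.Ici 0) := by
        apply monotoneOn_of_deriv_nonneg (convex_Ici 0)
          (Continuous.continuousOn (by
            fun_prop (disch := exact fun x => ne_of_gt (hDpos x))))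
          (fun y _ => (hgd y).differentiableAt.differentiableWithinAt)
        intro y hy
        rw [(hgd y).deriv]
        rw [interior_Ici] at hy
        rw [← hg10]
        exact hg1mono (le_of_lt hy)
      have := this (Set.self_mem_Ici) (Set.mem_Ici.2 hx) hx
      rwa [hg0] at this
    · have : AntitoneOn g (Set.Iic 0) := by
        apply antitoneOn_of_deriv_nonpos (convex_Iic 0)
          (Continuous.continuousOn (by
            fun_prop (disch := exact fun x => ne_of_gt (hDpos x))))
          (fun y _ => (hgd y).differentiableAt.differentiableWithinAt)
        intro y hy
        rw [(hgd y).deriv]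
        rw [interior_Iic] at hy
        rw [← hg10]
        exact hg1mono (le_of_lt hy)
      have := this (Set.mem_Iic.2 (le_of_lt hx)) (Set.self_mem_Iic) (le_of_lt hx)
      rwa [hg0] at this
  -- conclude
  have key : (1 - p) * Real.exp (-p * h) + p * Real.exp ((1 - p) * h)
      = Real.exp (-p * h + Real.log (D h)) := by
    rw [Real.exp_add, Real.exp_log (hDpos h), hD]
    rw [show (1 - p) * h = h + -p * h by ring, Real.exp_add]
    ring
  rw [key]
  apply Real.exp_le_exp.2
  have := hgnonneg h
  simp only [hg] at this
  linarith

lemma hoeffding_mgf {X : Type*} [Fintype X] (q g : X → ℝ) (hq : ∀ x, 0 ≤ q x)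
    (hq1 : ∑ x, q x = 1) {a b : ℝ} (hga : ∀ x, a ≤ g x) (hgb : ∀ x, g x ≤ b)
    (hmean : ∑ x, q x * g x = 0) (t : ℝ) :
    ∑ x, q x * Real.exp (t * g x) ≤ Real.exp (t ^ 2 * (b - a) ^ 2 / 8) := by
  have ha0 : a ≤ 0 := by
    have : ∑ x, q x * a ≤ ∑ x, q x * g x :=
      Finset.sum_le_sum fun x _ => mul_le_mul_of_nonneg_left (hga x) (hq x)
    rw [hmean, ← Finset.sum_mul, hq1, one_mul] at this
    exact this
  have hb0 : 0 ≤ b := by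
    have : ∑ x, q x * g x ≤ ∑ x, q x * b :=
      Finset.sum_le_sum fun x _ => mul_le_mul_of_nonneg_left (hgb x) (hq x)
    rw [hmean, ← Finset.sum_mul, hq1, one_mul] at this
    exact this
  rcases eq_or_lt_of_le (le_trans ha0 hb0) with hab | hab
  · -- a = 0 = b, g x = 0 for all x
    have ha : a = 0 := le_antisymm ha0 (hab ▸ hb0)
    have hb : b = 0 := by rw [← hab, ha]
    have hgx : ∀ x, g x = 0 := fun x => le_antisymm (hb ▸ hgb x) (ha ▸ hga x)
    simp [hgx, hq1, ha, hb]
  · -- a < b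
    have hba : (0:ℝ) < b - a := by linarith
    have hpt : ∀ x, Real.exp (t * g x) ≤
        (b - g x) / (b - a) * Real.exp (t * a) + (g x - a) / (b - a) * Real.exp (t * b) := by
      intro x
      have hl : 0 ≤ (b - g x) / (b - a) := div_nonneg (by linarith [hgb x]) hba.le
      have hr : 0 ≤ (g x - a) / (b - a) := div_nonneg (by linarith [hga x]) hba.le
      have hsum : (b - g x) / (b - a) + (g x - a) / (b - a) = 1 := by
        field_simp
        ring
      have := convexOn_exp.2 (Set.mem_univ (t * a)) (Set.mem_univ (t * b)) hl hr hsum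
      simp only [smul_eq_mul] at this
      have harg : (b - g x) / (b - a) * (t * a) + (g x - a) / (b - a) * (t * b) = t * g x := by
        field_simp
        ring
      rwa [harg] at this
    calc ∑ x, q x * Real.exp (t * g x)
        ≤ ∑ x, q x * ((b - g x) / (b - a) * Real.exp (t * a)
            + (g x - a) / (b - a) * Real.exp (t * b)) :=
          Finset.sum_le_sum fun x _ => mul_le_mul_of_nonneg_left (hpt x) (hq x)
      _ = b / (b - a) * Real.exp (t * a) + (-a) / (b - a) * Real.exp (t * b) := by
          have e1 : ∀ x : X, q x * ((b - g x) / (b - a) * Real.exp (t * a)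
              + (g x - a) / (b - a) * Real.exp (t * b))
              = (q x * b - q x * g x) * (Real.exp (t * a) / (b - a))
                + (q x * g x - q x * a) * (Real.exp (t * b) / (b - a)) := by
            intro x; field_simp
          rw [Finset.sum_congr rfl fun x _ => e1 x]
          rw [Finset.sum_add_distrib, ← Finset.sum_mul, ← Finset.sum_mul,
            Finset.sum_sub_distrib, Finset.sum_sub_distrib, hmean,
            ← Finset.sum_mul, ← Finset.sum_mul, hq1]
          ring
      _ ≤ Real.exp (t ^ 2 * (b - a) ^ 2 / 8) := by
          have key := hoeffding_analytic (-a / (b - a)) (t * (b - a))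
            (div_nonneg (neg_nonneg.2 ha0) hba.le) (by rw [div_le_one hba]; linarith)
          have e2 : (1 : ℝ) - -a / (b - a) = b / (b - a) := by field_simp; ring
          have e3 : -(-a / (b - a)) * (t * (b - a)) = t * a := by field_simp
          have e4 : (1 - -a / (b - a)) * (t * (b - a)) = t * b := by field_simp; ring
          have e5 : (t * (b - a)) ^ 2 / 8 = t ^ 2 * (b - a) ^ 2 / 8 := by ring
          rw [e3, e4, e5, e2] at key
          linarith [key]

lemma chernoff_tail {N : ℕ} (m : ℕ) (hm : 0 < m) (q g : Fin N → ℝ) (hq : ∀ x, 0 ≤ q x)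
    (hq1 : ∑ x, q x = 1) {a b : ℝ} (hga : ∀ x, a ≤ g x) (hgb : ∀ x, g x ≤ b)
    (hmean : ∑ x, q x * g x = 0) (hab : a < b) (u : ℝ) (hu : 0 < u) :
    ∑ ω ∈ Finset.univ.filter (fun ω : Fin m → Fin N => u ≤ ∑ i, g (ω i)), ∏ i, q (ω i)
      ≤ Real.exp (-(2 * u ^ 2) / (m * (b - a) ^ 2)) := by
  have hc : (0:ℝ) < b - a := sub_pos.2 hab
  have hm' : (0:ℝ) < m := by exact_mod_cast hm
  set t : ℝ := 4 * u / (m * (b - a) ^ 2) with ht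
  have htpos : 0 < t := by positivity
  have step1 : ∑ ω ∈ Finset.univ.filter (fun ω : Fin m → Fin N => u ≤ ∑ i, g (ω i)),
        ∏ i, q (ω i)
      ≤ ∑ ω : Fin m → Fin N, Real.exp (-(t * u)) * ∏ i, (q (ω i) * Real.exp (t * g (ω i))) := by
    apply le_trans (Finset.sum_le_sum (fun ω hω => ?_))
      (Finset.sum_le_sum_of_subset_of_nonneg (Finset.filter_subset _ _)
        (fun ω _ _ => mul_nonneg (Real.exp_nonneg _)
          (Finset.prod_nonneg fun i _ => mul_nonneg (hq _) (Real.exp_nonneg _))))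
    rw [Finset.mem_filter] at hω
    have h1 : (1:ℝ) ≤ Real.exp (-(t * u) + t * ∑ i, g (ω i)) := by
      rw [show (1:ℝ) = Real.exp 0 by simp]
      apply Real.exp_le_exp.2
      nlinarith [hω.2, htpos]
    calc ∏ i, q (ω i) = (∏ i, q (ω i)) * 1 := by ring
      _ ≤ (∏ i, q (ω i)) * Real.exp (-(t * u) + t * ∑ i, g (ω i)) :=
          mul_le_mul_of_nonneg_left h1 (Finset.prod_nonneg fun i _ => hq _)
      _ = Real.exp (-(t * u)) * ∏ i, (q (ω i) * Real.exp (t * g (ω i))) := by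
          rw [Finset.prod_mul_distrib, ← Real.exp_sum, Real.exp_add, ← Finset.mul_sum]
          ring
  have step2 : ∑ ω : Fin m → Fin N, Real.exp (-(t * u))
        * ∏ i, (q (ω i) * Real.exp (t * g (ω i)))
      = Real.exp (-(t * u)) * (∑ x, q x * Real.exp (t * g x)) ^ m := by
    rw [← Finset.mul_sum, Fintype.sum_pow]
  have step3 : (∑ x, q x * Real.exp (t * g x)) ^ m
      ≤ Real.exp ((m : ℝ) * (t ^ 2 * (b - a) ^ 2 / 8)) := by
    have hb := hoeffding_mgf q g hq hq1 hga hgb hmean t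
    have hnn : 0 ≤ ∑ x, q x * Real.exp (t * g x) :=
      Finset.sum_nonneg fun x _ => mul_nonneg (hq x) (Real.exp_nonneg _)
    calc (∑ x, q x * Real.exp (t * g x)) ^ m
        ≤ (Real.exp (t ^ 2 * (b - a) ^ 2 / 8)) ^ m := pow_le_pow_left₀ hnn hb m
      _ = Real.exp ((m : ℝ) * (t ^ 2 * (b - a) ^ 2 / 8)) := by
          rw [← Real.exp_nat_mul]
  calc ∑ ω ∈ Finset.univ.filter (fun ω : Fin m → Fin N => u ≤ ∑ i, g (ω i)), ∏ i, q (ω i)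
      ≤ Real.exp (-(t * u)) * (∑ x, q x * Real.exp (t * g x)) ^ m := by
        rw [← step2]; exact step1
    _ ≤ Real.exp (-(t * u)) * Real.exp ((m : ℝ) * (t ^ 2 * (b - a) ^ 2 / 8)) :=
        mul_le_mul_of_nonneg_left step3 (Real.exp_nonneg _)
    _ = Real.exp (-(2 * u ^ 2) / (m * (b - a) ^ 2)) := by
        rw [← Real.exp_add]
        congr 1
        rw [ht]
        field_simp
        ring


/-- **Sensitivity-based importance sampling concentration** (Hoeffding bound).
The data set is `X = Fin N`, `F` is a family of non-negative functions with positive total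
loss `L(f) = ∑_x f(x)`, `s` dominates the sensitivities, `S = ∑_x s(x)`, `q = s/S`.
Drawing `m` i.i.d. samples `ω 1, …, ω m` from `q` (modelled by the product distribution
`ω ↦ ∏ i, q (ω i)` on `Fin m → Fin N`) and forming
`L_S(f) = (1/m) ∑ i f(ω i)/q(ω i)`, for every `ε > 0` and `f ∈ F`,
`P(|L_S(f)/L(f) − 1| > ε) ≤ 2 exp(−2 m ε² / S²)`. -/
theorem importance_sampling_concentration
    {N m : ℕ} (hm : 0 < m)
    (F : Set ((Fin N) → ℝ))
    (hF : ∀ f ∈ F, ∀ x, 0 ≤ f x)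
    (hL : ∀ f ∈ F, 0 < ∑ x, f x)
    (s : Fin N → ℝ) (hs : ∀ x, 0 < s x)
    (hsens : ∀ f ∈ F, ∀ x, f x / (∑ y, f y) ≤ s x)
    (q : Fin N → ℝ) (hq : ∀ x, q x = s x / (∑ y, s y))
    (f : Fin N → ℝ) (hf : f ∈ F) (ε : ℝ) (hε : 0 < ε) :
    (∑ ω ∈ Finset.univ.filter (fun ω : Fin m → Fin N =>
        ε < |((1 / (m : ℝ)) * ∑ i, f (ω i) / q (ω i)) / (∑ x, f x) - 1|),
      ∏ i, q (ω i))
    ≤ 2 * Real.exp (-(2 * (m : ℝ) * ε ^ 2) / (∑ x, s x) ^ 2) := by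
  classical
  set L := ∑ x, f x with hLdef
  set S := ∑ x, s x with hSdef
  have hLpos : 0 < L := hL f hf
  have hS1 : (1:ℝ) ≤ S := by
    have h1 : ∑ x, f x / L ≤ ∑ x, s x := Finset.sum_le_sum fun x _ => hsens f hf x
    rwa [← Finset.sum_div, ← hLdef, div_self hLpos.ne'] at h1
  have hSpos : 0 < S := lt_of_lt_of_le one_pos hS1
  have hm' : (0:ℝ) < m := by exact_mod_cast hm
  have hqpos : ∀ x, 0 < q x := fun x => by rw [hq x]; exact div_pos (hs x) hSpos
  have hqnn : ∀ x, 0 ≤ q x := fun x => (hqpos x).le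
  have hq1 : ∑ x, q x = 1 := by
    rw [Finset.sum_congr rfl fun x _ => hq x, ← Finset.sum_div, ← hSdef,
      div_self hSpos.ne']
  set g : Fin N → ℝ := fun x => f x / q x - L with hgdef
  have hmean : ∑ x, q x * g x = 0 := by
    have h1 : ∀ x, q x * g x = f x - q x * L := fun x => by
      show q x * (f x / q x - L) = f x - q x * L
      have hne : q x ≠ 0 := (hqpos x).ne'
      field_simp
    rw [Finset.sum_congr rfl fun x _ => h1 x, Finset.sum_sub_distrib, ← Finset.sum_mul,
      hq1, ← hLdef]
    ring
  have hga : ∀ x, -L ≤ g x := by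
    intro x
    have : 0 ≤ f x / q x := div_nonneg (hF f hf x) (hqnn x)
    show -L ≤ f x / q x - L
    linarith
  have hgb : ∀ x, g x ≤ L * S - L := by
    intro x
    have h1 : f x / q x ≤ L * S := by
      rw [hq x, div_div_eq_mul_div, div_le_iff₀ (hs x)]
      have h2 : f x ≤ s x * L := by
        have := hsens f hf x
        rw [← hLdef] at this
        rw [div_le_iff₀ hLpos] at this
        linarith
      nlinarith [hSpos]
    show f x / q x - L ≤ L * S - L
    linarith
  have hab : -L < L * S - L := by nlinarith
  have hLS : L * S - L - (-L) = L * S := by ring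
  have humain : 0 < (m : ℝ) * L * ε := by positivity
  -- two tails
  have hA := chernoff_tail (N := N) m hm q g hqnn hq1 hga hgb hmean hab
    ((m : ℝ) * L * ε) humain
  have hmean' : ∑ x, q x * (-g x) = 0 := by
    simp only [mul_neg, Finset.sum_neg_distrib, hmean, neg_zero]
  have hga' : ∀ x, -(L * S - L) ≤ -g x := fun x => neg_le_neg (hgb x)
  have hgb' : ∀ x, -g x ≤ L := fun x => by have := hga x; linarith
  have hab' : -(L * S - L) < L := by nlinarith
  have hB := chernoff_tail (N := N) m hm q (fun x => -g x) hqnn hq1 hga' hgb' hmean' hab'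
    ((m : ℝ) * L * ε) humain
  -- exponent identification
  have hexp : -(2 * ((m : ℝ) * L * ε) ^ 2) / ((m : ℝ) * (L * S) ^ 2)
      = -(2 * (m : ℝ) * ε ^ 2) / S ^ 2 := by
    field_simp
  rw [hLS, hexp] at hA
  have hLS' : L - -(L * S - L) = L * S := by ring
  rw [hLS', hexp] at hB
  -- event inclusion
  have hsub : Finset.univ.filter (fun ω : Fin m → Fin N =>
        ε < |((1 / (m : ℝ)) * ∑ i, f (ω i) / q (ω i)) / L - 1|)
      ⊆ Finset.univ.filter (fun ω : Fin m → Fin N => (m : ℝ) * L * ε ≤ ∑ i, g (ω i))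
        ∪ Finset.univ.filter (fun ω : Fin m → Fin N => (m : ℝ) * L * ε ≤ ∑ i, -g (ω i)) := by
    intro ω hω
    rw [Finset.mem_filter] at hω
    have hsum : ∑ i, f (ω i) / q (ω i) = (∑ i, g (ω i)) + m * L := by
      simp only [hgdef]
      rw [Finset.sum_sub_distrib, Finset.sum_const, Finset.card_univ, Fintype.card_fin,
        nsmul_eq_mul]
      ring
    have hexpr : ((1 / (m : ℝ)) * ∑ i, f (ω i) / q (ω i)) / L - 1
        = (∑ i, g (ω i)) / ((m : ℝ) * L) := by
      rw [hsum]
      field_simp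
      ring
    rw [hexpr] at hω
    have h2 : (m : ℝ) * L * ε < |∑ i, g (ω i)| := by
      have h3 := hω.2
      rw [abs_div, abs_of_pos (by positivity : (0:ℝ) < (m : ℝ) * L)] at h3
      rw [lt_div_iff₀ (by positivity : (0:ℝ) < (m : ℝ) * L)] at h3
      linarith
    rw [Finset.mem_union, Finset.mem_filter, Finset.mem_filter]
    rcases lt_abs.mp h2 with h4 | h4
    · exact Or.inl ⟨Finset.mem_univ _, h4.le⟩
    · right
      refine ⟨Finset.mem_univ _, ?_⟩
      rw [Finset.sum_neg_distrib]
      linarith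
  -- assemble
  have hnn : ∀ ω : Fin m → Fin N, 0 ≤ ∏ i, q (ω i) :=
    fun ω => Finset.prod_nonneg fun i _ => hqnn _
  calc (∑ ω ∈ Finset.univ.filter (fun ω : Fin m → Fin N =>
        ε < |((1 / (m : ℝ)) * ∑ i, f (ω i) / q (ω i)) / L - 1|), ∏ i, q (ω i))
      ≤ ∑ ω ∈ (Finset.univ.filter (fun ω : Fin m → Fin N =>
            (m : ℝ) * L * ε ≤ ∑ i, g (ω i))
          ∪ Finset.univ.filter (fun ω : Fin m → Fin N =>
            (m : ℝ) * L * ε ≤ ∑ i, -g (ω i))), ∏ i, q (ω i) :=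
        Finset.sum_le_sum_of_subset_of_nonneg hsub (fun ω _ _ => hnn ω)
    _ ≤ (∑ ω ∈ Finset.univ.filter (fun ω : Fin m → Fin N =>
            (m : ℝ) * L * ε ≤ ∑ i, g (ω i)), ∏ i, q (ω i))
        + ∑ ω ∈ Finset.univ.filter (fun ω : Fin m → Fin N =>
            (m : ℝ) * L * ε ≤ ∑ i, -g (ω i)), ∏ i, q (ω i) := by
        have h5 := Finset.sum_union_inter (s₁ := Finset.univ.filter
            (fun ω : Fin m → Fin N => (m : ℝ) * L * ε ≤ ∑ i, g (ω i)))
          (s₂ := Finset.univ.filter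
            (fun ω : Fin m → Fin N => (m : ℝ) * L * ε ≤ ∑ i, -g (ω i)))
          (f := fun ω => ∏ i, q (ω i))
        have h6 : 0 ≤ ∑ ω ∈ (Finset.univ.filter (fun ω : Fin m → Fin N =>
            (m : ℝ) * L * ε ≤ ∑ i, g (ω i)) ∩ Finset.univ.filter
            (fun ω : Fin m → Fin N => (m : ℝ) * L * ε ≤ ∑ i, -g (ω i))),
            ∏ i, q (ω i) := Finset.sum_nonneg fun ω _ => hnn ω
        linarith
    _ ≤ Real.exp (-(2 * (m : ℝ) * ε ^ 2) / S ^ 2)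
        + Real.exp (-(2 * (m : ℝ) * ε ^ 2) / S ^ 2) := add_le_add hA hB
    _ = 2 * Real.exp (-(2 * (m : ℝ) * ε ^ 2) / S ^ 2) := by ring
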